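/- Fix an integer r ≥ 1. The 4-color Ramsey number of the matching rK_2 equals 5r − 3. That is: (1) for every coloring of the edges of the complete graph K_{5r−3} with 4 colors, some color class contains r pairwise disjoint edges; and (2) there exists a coloring of the edges of K_{5r−4} with 4 colors in which no color class contains r pairwise disjoint edges. -/

import Mathlib

open Finset

/-- Two edges of a complete graph (elements of `Sym2 (Fin n)`) are disjoint if they
share no vertex. -/
def EdgeDisjoint {n : ℕ} (e f : Sym2 (Fin n)) : Prop := ∀ v, v ∈ e → v ∉ f

/-- A finite set of elements of `Sym2 (Fin n)` is a matching if each element is a genuine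
(non-loop) edge and the edges are pairwise disjoint. -/
def IsMatchingIn {n : ℕ} (M : Finset (Sym2 (Fin n))) : Prop :=
  (∀ e ∈ M, ¬ e.IsDiag) ∧ (M : Set (Sym2 (Fin n))).Pairwise EdgeDisjoint

/-- A history of the online Ramsey game on `K_n` with `t` colours: the list of
edges played so far, each together with the colour Painter gave it. -/
abbrev GameHistory (n t : ℕ) := List (Sym2 (Fin n) × Fin t)

/-- A Builder strategy: given the history so far, select the next edge. -/
abbrev BuilderStrategy (n t : ℕ) := GameHistory n t → Sym2 (Fin n)

/-- A Painter strategy: given the history so far and the newly selected edge,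
choose a colour for it. -/
abbrev PainterStrategy (n t : ℕ) := GameHistory n t → Sym2 (Fin n) → Fin t

/-- The history after `k` moves when Builder plays strategy `B` against Painter
strategy `P`. -/
def gamePlay {n t : ℕ} (B : BuilderStrategy n t) (P : PainterStrategy n t) :
    ℕ → GameHistory n t
  | 0 => []
  | k + 1 =>
      let h := gamePlay B P k
      h ++ [(B h, P h (B h))]

/-- Builder plays legally for the first `k` moves against `P`: every selected edge
is a genuine (non-loop) edge not selected before. -/
def BuilderValid {n t : ℕ} (B : BuilderStrategy n t) (P : PainterStrategy n t)
    (k : ℕ) : Prop :=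
  ∀ j < k, ¬ (B (gamePlay B P j)).IsDiag ∧
    B (gamePlay B P j) ∉ (gamePlay B P j).map Prod.fst

/-- The history `h` contains, for some colour `i`, a matching of `r i` edges all
coloured `i`. -/
def HistoryHasMatching (n t : ℕ) (r : Fin t → ℕ) (h : GameHistory n t) : Prop :=
  ∃ i : Fin t, ∃ M : Finset (Sym2 (Fin n)),
    M.card = r i ∧ IsMatchingIn M ∧ ∀ e ∈ M, (e, i) ∈ h

/-- Builder can force, within `k` legal moves on `K_n` with `t` colours, some colour
`i` to contain a matching of `r i` edges, against every Painter strategy. -/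
def BuilderWinsIn (n t : ℕ) (r : Fin t → ℕ) (k : ℕ) : Prop :=
  ∃ B : BuilderStrategy n t, (∀ P : PainterStrategy n t, BuilderValid B P k) ∧
    ∀ P : PainterStrategy n t, HistoryHasMatching n t r (gamePlay B P k)

/-- The restricted online Ramsey number `R̃(r₁K₂,…,r_tK₂; n)`: the least `k` such
that Builder can force a win within `k` moves. -/
noncomputable def restrictedOnlineRamsey (n t : ℕ) (r : Fin t → ℕ) : ℕ :=
  sInf {k | BuilderWinsIn n t r k}

/-- A colouring `c` of (the edges of) `K_N` with `t` colours contains, for some colour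
`i`, a matching of `r i` edges all coloured `i`. -/
def ColoringHasMatching (N t : ℕ) (r : Fin t → ℕ) (c : Sym2 (Fin N) → Fin t) : Prop :=
  ∃ i : Fin t, ∃ M : Finset (Sym2 (Fin N)),
    M.card = r i ∧ IsMatchingIn M ∧ ∀ e ∈ M, c e = i

/-- The classical Ramsey number `R(r₁K₂,…,r_tK₂)`: the least `N` such that every
`t`-colouring of the edges of `K_N` contains, for some `i`, a matching of `r i`
edges in colour `i`. -/
noncomputable def matchingRamsey (t : ℕ) (r : Fin t → ℕ) : ℕ :=
  sInf {N | ∀ c : Sym2 (Fin N) → Fin t, ColoringHasMatching N t r c}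

namespace CL

variable {n : ℕ}

/-- The vertex set of an edge, as a `Finset`. -/
def eV (e : Sym2 (Fin n)) : Finset (Fin n) := Finset.univ.filter (· ∈ e)

@[simp] lemma mem_eV {e : Sym2 (Fin n)} {v : Fin n} : v ∈ eV e ↔ v ∈ e := by
  simp [eV]

lemma eV_mk (a b : Fin n) : eV s(a, b) = {a, b} := by
  ext v; simp [eV, Sym2.mem_iff]

lemma card_eV {e : Sym2 (Fin n)} (he : ¬ e.IsDiag) : (eV e).card = 2 := by
  induction e using Sym2.ind with
  | _ a b =>
    rw [Sym2.mk_isDiag_iff] at he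
    rw [eV_mk, card_insert_of_notMem (by simp [he]), card_singleton]

/-- A valid matching of colour `i` inside the vertex set `S`. -/
def Valid (χ : Sym2 (Fin n) → Fin 4) (S : Finset (Fin n)) (i : Fin 4)
    (M : Finset (Sym2 (Fin n))) : Prop :=
  IsMatchingIn M ∧ ∀ e ∈ M, χ e = i ∧ ∀ v ∈ e, v ∈ S

noncomputable def fam (χ : Sym2 (Fin n) → Fin 4) (S : Finset (Fin n)) (i : Fin 4) :
    Finset (Finset (Sym2 (Fin n))) :=
  @Finset.filter _ (Valid χ S i) (Classical.decPred _) Finset.univ.powerset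

lemma mem_fam {χ : Sym2 (Fin n) → Fin 4} {S : Finset (Fin n)} {i : Fin 4}
    {M : Finset (Sym2 (Fin n))} : M ∈ fam χ S i ↔ Valid χ S i M := by
  simp [fam]

/-- The matching number of colour `i` within `S`. -/
noncomputable def nu (χ : Sym2 (Fin n) → Fin 4) (S : Finset (Fin n)) (i : Fin 4) : ℕ :=
  (fam χ S i).sup Finset.card

lemma valid_empty (χ : Sym2 (Fin n) → Fin 4) (S : Finset (Fin n)) (i : Fin 4) :
    Valid χ S i (∅ : Finset (Sym2 (Fin n))) := by
  refine ⟨⟨by simp, by simp [Set.Pairwise]⟩, by simp⟩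

lemma card_le_nu {χ : Sym2 (Fin n) → Fin 4} {S : Finset (Fin n)} {i : Fin 4}
    {M : Finset (Sym2 (Fin n))} (h : Valid χ S i M) : M.card ≤ nu χ S i :=
  Finset.le_sup (mem_fam.2 h)

lemma exists_max (χ : Sym2 (Fin n) → Fin 4) (S : Finset (Fin n)) (i : Fin 4) :
    ∃ M, Valid χ S i M ∧ M.card = nu χ S i := by
  obtain ⟨M, hM, hc⟩ := Finset.exists_mem_eq_sup (fam χ S i)
    ⟨∅, mem_fam.2 (valid_empty χ S i)⟩ Finset.card
  exact ⟨M, mem_fam.1 hM, hc.symm⟩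

lemma valid_mono {χ : Sym2 (Fin n) → Fin 4} {S T : Finset (Fin n)} {i : Fin 4}
    {M : Finset (Sym2 (Fin n))} (hST : S ⊆ T) (h : Valid χ S i M) : Valid χ T i M :=
  ⟨h.1, fun e he => ⟨(h.2 e he).1, fun v hv => hST ((h.2 e he).2 v hv)⟩⟩

lemma nu_mono {χ : Sym2 (Fin n) → Fin 4} {S T : Finset (Fin n)} (hST : S ⊆ T) (i : Fin 4) :
    nu χ S i ≤ nu χ T i := by
  apply Finset.sup_le
  intro M hM
  exact card_le_nu (valid_mono hST (mem_fam.1 hM))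

/-- Covered vertices of a matching. -/
def cov (M : Finset (Sym2 (Fin n))) : Finset (Fin n) := M.biUnion eV

@[simp] lemma mem_cov {M : Finset (Sym2 (Fin n))} {v : Fin n} :
    v ∈ cov M ↔ ∃ e ∈ M, v ∈ e := by simp [cov]

lemma card_cov {M : Finset (Sym2 (Fin n))} (hM : IsMatchingIn M) :
    (cov M).card = 2 * M.card := by
  rw [cov, Finset.card_biUnion, Finset.sum_congr rfl (fun e he => card_eV (hM.1 e he))]
  · simp [Nat.mul_comm]
  · intro e he f hf hef
    apply Finset.disjoint_left.2
    intro v hv hv'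
    exact hM.2 he hf hef v (mem_eV.1 hv) (mem_eV.1 hv')

/-- At most one edge of a matching contains a given vertex. -/
lemma matching_filter_card_le_one {M : Finset (Sym2 (Fin n))} (hM : IsMatchingIn M)
    (v : Fin n) : (M.filter (fun e => v ∈ e)).card ≤ 1 := by
  apply Finset.card_le_one.2
  intro e he f hf
  simp only [Finset.mem_filter] at he hf
  by_contra hne
  exact hM.2 he.1 hf.1 hne v he.2 hf.2

lemma matching_not_mem_filter {M : Finset (Sym2 (Fin n))} {v : Fin n}
    (h : ∀ e ∈ M, v ∉ e) : (M.filter (fun e => v ∈ e)) = ∅ := by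
  apply Finset.filter_eq_empty_iff.2
  intro e he
  exact h e he

/-- Inserting a fresh edge into a matching. -/
lemma valid_insert {χ : Sym2 (Fin n) → Fin 4} {S : Finset (Fin n)} {i : Fin 4}
    {M : Finset (Sym2 (Fin n))} (hM : Valid χ S i M) {a b : Fin n} (hab : a ≠ b)
    (hS : a ∈ S) (hS' : b ∈ S) (hχ : χ s(a, b) = i)
    (hfa : ∀ e ∈ M, a ∉ e) (hfb : ∀ e ∈ M, b ∉ e) :
    Valid χ S i (insert s(a, b) M) ∧ (insert s(a, b) M).card = M.card + 1 := by
  have hnotmem : s(a, b) ∉ M := fun h => hfa _ h (by simp)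
  constructor
  · refine ⟨⟨?_, ?_⟩, ?_⟩
    · intro e he
      rcases Finset.mem_insert.1 he with h | h
      · subst h; simp [Sym2.mk_isDiag_iff, hab]
      · exact hM.1.1 e h
    · intro e he f hf hef
      simp only [Finset.coe_insert, Set.mem_insert_iff, Finset.mem_coe] at he hf
      have key : ∀ g ∈ M, EdgeDisjoint s(a, b) g := by
        intro g hg v hv
        rcases Sym2.mem_iff.1 hv with rfl | rfl
        · exact fun h => hfa g hg h
        · exact fun h => hfb g hg h
      have key' : ∀ g ∈ M, EdgeDisjoint g s(a, b) := by
        intro g hg v hv hv'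
        rcases Sym2.mem_iff.1 hv' with rfl | rfl
        · exact hfa g hg hv
        · exact hfb g hg hv
      rcases he with rfl | he <;> rcases hf with rfl | hf
      · exact absurd rfl hef
      · exact key f hf
      · exact key' e he
      · exact hM.1.2 he hf hef
    · intro e he
      rcases Finset.mem_insert.1 he with h | h
      · subst h
        refine ⟨hχ, ?_⟩
        intro v hv
        rcases Sym2.mem_iff.1 hv with rfl | rfl <;> assumption
      · exact hM.2 e h
  · rw [Finset.card_insert_of_notMem hnotmem]

/-- The "flip" of two matchings along a closed edge set. -/
lemma valid_flip {χ : Sym2 (Fin n) → Fin 4} {S : Finset (Fin n)} {c : Fin 4}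
    {A B DR : Finset (Sym2 (Fin n))} {RS : Finset (Fin n)}
    (hA : Valid χ S c A) (hB : Valid χ S c B)
    (hDRR : ∀ e ∈ DR, ∀ v : Fin n, v ∈ e → v ∈ RS)
    (hcl : ∀ e, e ∈ A → e ∉ B → ∀ v : Fin n, v ∈ e → v ∈ RS → e ∈ DR) :
    Valid χ S c ((A \ DR) ∪ (B ∩ DR)) := by
  have hmem : ∀ e ∈ (A \ DR) ∪ (B ∩ DR), e ∈ A ∨ e ∈ B := by
    intro e he
    rcases Finset.mem_union.1 he with h | h
    · exact Or.inl (Finset.mem_sdiff.1 h).1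
    · exact Or.inr (Finset.mem_inter.1 h).1
  refine ⟨⟨?_, ?_⟩, ?_⟩
  · intro e he
    rcases hmem e he with h | h
    · exact hA.1.1 e h
    · exact hB.1.1 e h
  · intro e he f hf hef
    simp only [Finset.mem_coe] at he hf
    have cross : ∀ g₁ g₂, g₁ ∈ A \ DR → g₂ ∈ B ∩ DR → g₁ ≠ g₂ → EdgeDisjoint g₁ g₂ := by
      intro g₁ g₂ h1 h2 hne v hv1 hv2
      have h1A := (Finset.mem_sdiff.1 h1).1
      have h1DR := (Finset.mem_sdiff.1 h1).2
      have h2B := (Finset.mem_inter.1 h2).1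
      have h2DR := (Finset.mem_inter.1 h2).2
      have hvRS : v ∈ RS := hDRR g₂ h2DR v hv2
      by_cases h1B : g₁ ∈ B
      · exact hB.1.2 h1B h2B hne v hv1 hv2
      · exact h1DR (hcl g₁ h1A h1B v hv1 hvRS)
    rcases Finset.mem_union.1 he with he' | he' <;> rcases Finset.mem_union.1 hf with hf' | hf'
    · exact hA.1.2 (Finset.mem_sdiff.1 he').1 (Finset.mem_sdiff.1 hf').1 hef
    · exact cross e f he' hf' hef
    · intro v hv hvf
      exact cross f e hf' he' (Ne.symm hef) v hvf hv
    · exact hB.1.2 (Finset.mem_inter.1 he').1 (Finset.mem_inter.1 hf').1 hef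
  · intro e he
    rcases hmem e he with h | h
    · exact hA.2 e h
    · exact hB.2 e h

/-- The auxiliary graph on an edge set. -/
def DG (D : Finset (Sym2 (Fin n))) : SimpleGraph (Fin n) where
  Adj a b := a ≠ b ∧ s(a, b) ∈ D
  symm := by
    constructor
    intro a b h
    obtain ⟨h1, h2⟩ := h
    exact ⟨h1.symm, by rwa [Sym2.eq_swap]⟩
  loopless := by constructor; intro a h; exact h.1 rfl

lemma closer {D : Finset (Sym2 (Fin n))} {x v : Fin n} (hv : (DG D).Reachable x v)
    (hvx : v ≠ x) :
    ∃ u, (DG D).Adj u v ∧ (DG D).Reachable x u ∧ (DG D).dist x u < (DG D).dist x v := by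
  obtain ⟨p, hp⟩ := hv.exists_walk_length_eq_dist
  have hq := p.reverse
  cases hq2 : p.reverse with
  | nil => exact absurd rfl hvx
  | cons h q' =>
    rename_i w
    refine ⟨w, h.symm, ⟨q'.reverse⟩, ?_⟩
    have hlen : q'.length + 1 = (DG D).dist x v := by
      have := congrArg SimpleGraph.Walk.length hq2
      simp only [SimpleGraph.Walk.length_reverse, SimpleGraph.Walk.length_cons] at this
      omega
    have hle : (DG D).dist x w ≤ q'.length := by
      have := SimpleGraph.dist_le q'.reverse
      simpa using this
    omega


/-- The key structural lemma: in a vertex set where no vertex is essential for colour `c`,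
there is no "cherry": a vertex `x` with two edges of colour `c` to two distinct
vertices missed by a maximum matching. -/
lemma no_cherry (χ : Sym2 (Fin n) → Fin 4) (S : Finset (Fin n)) (c : Fin 4)
    (HB : ∀ v : Fin n, nu χ (S.erase v) c = nu χ S c)
    (M : Finset (Sym2 (Fin n))) (hM : Valid χ S c M) (hMcard : M.card = nu χ S c)
    (x u₁ u₂ : Fin n) (hxS : x ∈ S) (hu₁S : u₁ ∈ S) (hu₂S : u₂ ∈ S)
    (hu₁M : ∀ e ∈ M, u₁ ∉ e) (hu₂M : ∀ e ∈ M, u₂ ∉ e) (hne : u₁ ≠ u₂)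
    (hx1 : u₁ ≠ x) (hx2 : u₂ ≠ x)
    (hc1 : χ s(u₁, x) = c) (hc2 : χ s(u₂, x) = c) : False := by
  classical
  -- a maximum matching avoiding x
  obtain ⟨M₂, hM₂v, hM₂card⟩ := exists_max χ (S.erase x) c
  rw [HB x] at hM₂card
  have hM₂S : Valid χ S c M₂ := valid_mono (Finset.erase_subset _ _) hM₂v
  have hxfree : ∀ e ∈ M₂, x ∉ e := by
    intro e he hx
    have := (hM₂v.2 e he).2 x hx
    exact (Finset.mem_erase.1 this).1 rfl
  -- the symmetric difference and its reachability structure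
  set D : Finset (Sym2 (Fin n)) := (M \ M₂) ∪ (M₂ \ M) with hD
  have hDsub : ∀ e ∈ D, e ∈ M ∨ e ∈ M₂ := by
    intro e he
    rcases Finset.mem_union.1 he with h | h
    · exact Or.inl (Finset.mem_sdiff.1 h).1
    · exact Or.inr (Finset.mem_sdiff.1 h).1
  have hDnd : ∀ e ∈ D, ¬ e.IsDiag := by
    intro e he
    rcases hDsub e he with h | h
    · exact hM.1.1 e h
    · exact hM₂S.1.1 e h
  set R : Finset (Fin n) :=
    @Finset.filter _ (fun v => (DG D).Reachable x v) (Classical.decPred _) Finset.univ with hR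
  have hmemR : ∀ v, v ∈ R ↔ (DG D).Reachable x v := by
    intro v; simp [hR]
  have hxR : x ∈ R := (hmemR x).2 (SimpleGraph.Reachable.refl x)
  have hclR : ∀ e ∈ D, ∀ v : Fin n, v ∈ e → v ∈ R → ∀ w : Fin n, w ∈ e → w ∈ R := by
    intro e he v hv hvR w hw
    induction e using Sym2.ind with
    | _ a b =>
      have hab : a ≠ b := by
        intro h; exact hDnd _ he (by simp [Sym2.mk_isDiag_iff, h])
      have hadj : (DG D).Adj a b := ⟨hab, he⟩
      rcases Sym2.mem_iff.1 hv with rfl | rfl <;> rcases Sym2.mem_iff.1 hw with rfl | rfl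
      · exact hvR
      · exact (hmemR _).2 (((hmemR _).1 hvR).trans hadj.reachable)
      · exact (hmemR _).2 (((hmemR _).1 hvR).trans hadj.symm.reachable)
      · exact hvR
  set DR : Finset (Sym2 (Fin n)) :=
    @Finset.filter _ (fun e => ∀ v : Fin n, v ∈ e → v ∈ R) (Classical.decPred _) D with hDR
  have hmemDR : ∀ e, e ∈ DR ↔ e ∈ D ∧ ∀ v : Fin n, v ∈ e → v ∈ R := by
    intro e; simp [hDR]
  have hDRcl : ∀ e ∈ D, ∀ v : Fin n, v ∈ e → v ∈ R → e ∈ DR := by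
    intro e he v hv hvR
    exact (hmemDR e).2 ⟨he, hclR e he v hv hvR⟩
  have hDRR : ∀ e ∈ DR, ∀ v : Fin n, v ∈ e → v ∈ R := fun e he => ((hmemDR e).1 he).2
  -- the two flips
  have hM' : Valid χ S c ((M \ DR) ∪ (M₂ ∩ DR)) := by
    apply valid_flip hM hM₂S hDRR
    intro e heA heB v hv hvR
    exact hDRcl e (Finset.mem_union.2 (Or.inl (Finset.mem_sdiff.2 ⟨heA, heB⟩))) v hv hvR
  have hM₂' : Valid χ S c ((M₂ \ DR) ∪ (M ∩ DR)) := by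
    apply valid_flip hM₂S hM hDRR
    intro e heA heB v hv hvR
    exact hDRcl e (Finset.mem_union.2 (Or.inr (Finset.mem_sdiff.2 ⟨heA, heB⟩))) v hv hvR
  set M' : Finset (Sym2 (Fin n)) := (M \ DR) ∪ (M₂ ∩ DR) with hM'def
  -- cardinalities
  have hdisj1 : Disjoint (M \ DR) (M₂ ∩ DR) := by
    rw [Finset.disjoint_left]
    intro e he he'
    exact (Finset.mem_sdiff.1 he).2 (Finset.mem_inter.1 he').2
  have hdisj2 : Disjoint (M₂ \ DR) (M ∩ DR) := by
    rw [Finset.disjoint_left]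
    intro e he he'
    exact (Finset.mem_sdiff.1 he).2 (Finset.mem_inter.1 he').2
  have e1 : (M ∩ DR).card + (M \ DR).card = M.card := Finset.card_inter_add_card_sdiff M DR
  have e2 : (M₂ ∩ DR).card + (M₂ \ DR).card = M₂.card := Finset.card_inter_add_card_sdiff M₂ DR
  have le1 : (M \ DR).card + (M₂ ∩ DR).card ≤ nu χ S c := by
    have := card_le_nu hM'
    rwa [hM'def, Finset.card_union_of_disjoint hdisj1] at this
  have le2 : (M₂ \ DR).card + (M ∩ DR).card ≤ nu χ S c := by
    have := card_le_nu hM₂'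
    rwa [Finset.card_union_of_disjoint hdisj2] at this
  have hM'card : M'.card = nu χ S c := by
    rw [hM'def, Finset.card_union_of_disjoint hdisj1]
    omega
  -- M' misses x
  have hxM' : ∀ e ∈ M', x ∉ e := by
    intro e he hx
    rcases Finset.mem_union.1 he with h | h
    · have heM := (Finset.mem_sdiff.1 h).1
      have heDR := (Finset.mem_sdiff.1 h).2
      by_cases heM₂ : e ∈ M₂
      · exact hxfree e heM₂ hx
      · exact heDR (hDRcl e (Finset.mem_union.2 (Or.inl (Finset.mem_sdiff.2 ⟨heM, heM₂⟩)))
          x hx hxR)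
    · exact hxfree e (Finset.mem_inter.1 h).1 hx
  -- if some uᵢ is outside R, we can augment: contradiction
  have missed : ∀ u, u ∈ S → u ≠ x → χ s(u, x) = c → (∀ e ∈ M, u ∉ e) → u ∉ R → False := by
    intro u huS hux hχu huM huR
    have huM' : ∀ e ∈ M', u ∉ e := by
      intro e he hu
      rcases Finset.mem_union.1 he with h | h
      · exact huM e (Finset.mem_sdiff.1 h).1 hu
      · exact huR (hDRR e (Finset.mem_inter.1 h).2 u hu)
    obtain ⟨hval, hcard⟩ := valid_insert hM' hux huS hxS hχu huM' hxM'
    have := card_le_nu hval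
    omega
  by_cases hu₁R : u₁ ∈ R
  case neg => exact missed u₁ hu₁S hx1 hc1 hu₁M hu₁R
  by_cases hu₂R : u₂ ∈ R
  case neg => exact missed u₂ hu₂S hx2 hc2 hu₂M hu₂R
  -- both u₁, u₂ in R : degree counting contradiction
  set deg : Fin n → ℕ := fun v => (DR.filter (fun e => v ∈ e)).card with hdegdef
  have hDRD : ∀ e ∈ DR, e ∈ D := fun e he => ((hmemDR e).1 he).1
  have handshake : ∑ v ∈ R, deg v = 2 * DR.card := by
    have h1 : ∀ v, deg v = ∑ e ∈ DR, if v ∈ e then 1 else 0 := by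
      intro v; rw [hdegdef]; exact Finset.card_filter _ _
    calc ∑ v ∈ R, deg v = ∑ v ∈ R, ∑ e ∈ DR, if v ∈ e then 1 else 0 := by
          exact Finset.sum_congr rfl (fun v _ => h1 v)
      _ = ∑ e ∈ DR, ∑ v ∈ R, if v ∈ e then 1 else 0 := Finset.sum_comm
      _ = ∑ e ∈ DR, (R.filter (fun v => v ∈ e)).card := by
          exact Finset.sum_congr rfl (fun e _ => (Finset.card_filter _ _).symm)
      _ = ∑ e ∈ DR, 2 := by
          apply Finset.sum_congr rfl
          intro e he
          have : R.filter (fun v => v ∈ e) = eV e := by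
            ext v
            simp only [Finset.mem_filter, mem_eV]
            exact ⟨fun h => h.2, fun h => ⟨hDRR e he v h, h⟩⟩
          rw [this, card_eV (hDnd e (hDRD e he))]
      _ = 2 * DR.card := by rw [Finset.sum_const, smul_eq_mul, Nat.mul_comm]
  have hdegx : deg x ≤ 1 := by
    rw [hdegdef]
    calc (DR.filter (fun e => x ∈ e)).card ≤ (M.filter (fun e => x ∈ e)).card := by
          apply Finset.card_le_card
          intro e he
          have he' := Finset.mem_filter.1 he
          rcases hDsub e (hDRD e he'.1) with h | h
          · exact Finset.mem_filter.2 ⟨h, he'.2⟩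
          · exact absurd he'.2 (hxfree e h)
      _ ≤ 1 := matching_filter_card_le_one hM.1 x
  have hdegu : ∀ u, (∀ e ∈ M, u ∉ e) → deg u ≤ 1 := by
    intro u huM
    rw [hdegdef]
    calc (DR.filter (fun e => u ∈ e)).card ≤ (M₂.filter (fun e => u ∈ e)).card := by
          apply Finset.card_le_card
          intro e he
          have he' := Finset.mem_filter.1 he
          rcases hDsub e (hDRD e he'.1) with h | h
          · exact absurd he'.2 (huM e h)
          · exact Finset.mem_filter.2 ⟨h, he'.2⟩
      _ ≤ 1 := matching_filter_card_le_one hM₂S.1 u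
  have hdeg2 : ∀ v, deg v ≤ 2 := by
    intro v
    rw [hdegdef]
    calc (DR.filter (fun e => v ∈ e)).card
        ≤ ((M.filter (fun e => v ∈ e)) ∪ (M₂.filter (fun e => v ∈ e))).card := by
          apply Finset.card_le_card
          intro e he
          have he' := Finset.mem_filter.1 he
          rcases hDsub e (hDRD e he'.1) with h | h
          · exact Finset.mem_union.2 (Or.inl (Finset.mem_filter.2 ⟨h, he'.2⟩))
          · exact Finset.mem_union.2 (Or.inr (Finset.mem_filter.2 ⟨h, he'.2⟩))
      _ ≤ (M.filter (fun e => v ∈ e)).card + (M₂.filter (fun e => v ∈ e)).card :=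
          Finset.card_union_le _ _
      _ ≤ 2 := by
          have := matching_filter_card_le_one hM.1 v
          have := matching_filter_card_le_one hM₂S.1 v
          omega
  -- injection from R.erase x into DR
  have hclose : ∀ v : Fin n, ∃ u, v ∈ R.erase x →
      ((DG D).Adj u v ∧ u ∈ R ∧ (DG D).dist x u < (DG D).dist x v) := by
    intro v
    by_cases hv : v ∈ R.erase x
    · obtain ⟨u, h1, h2, h3⟩ := closer ((hmemR v).1 (Finset.mem_of_mem_erase hv))
        (Finset.ne_of_mem_erase hv)
      exact ⟨u, fun _ => ⟨h1, (hmemR u).2 h2, h3⟩⟩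
    · exact ⟨x, fun h => absurd h hv⟩
  choose w hw using hclose
  have hmaps : ∀ v ∈ R.erase x, s(w v, v) ∈ DR := by
    intro v hv
    obtain ⟨hadj, hwR, _⟩ := hw v hv
    exact hDRcl _ hadj.2 v (by simp) (Finset.mem_of_mem_erase hv)
  have hinj : Set.InjOn (fun v => s(w v, v)) (R.erase x) := by
    intro v₁ hv₁ v₂ hv₂ heq
    simp only [Sym2.eq_iff] at heq
    rcases heq with ⟨_, h⟩ | ⟨h1, h2⟩
    · exact h
    · obtain ⟨_, _, hd1⟩ := hw v₁ hv₁
      obtain ⟨_, _, hd2⟩ := hw v₂ hv₂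
      rw [h1] at hd1
      rw [← h2] at hd2
      omega
  have hcardR : (R.erase x).card ≤ DR.card := by
    have := Finset.card_le_card_of_injOn (fun v => s(w v, v)) hmaps hinj
    simpa using this
  -- summation split and final contradiction
  have hu₁e : u₁ ∈ R.erase x := Finset.mem_erase.2 ⟨hx1, hu₁R⟩
  have hu₂e : u₂ ∈ (R.erase x).erase u₁ :=
    Finset.mem_erase.2 ⟨hne.symm, Finset.mem_erase.2 ⟨hx2, hu₂R⟩⟩
  have hsplit : ∑ v ∈ R, deg v
      = deg x + (deg u₁ + (deg u₂ + ∑ v ∈ (((R.erase x).erase u₁).erase u₂), deg v)) := by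
    rw [← Finset.add_sum_erase R deg hxR, ← Finset.add_sum_erase _ deg hu₁e,
      ← Finset.add_sum_erase _ deg hu₂e]
  have hrest : ∑ v ∈ (((R.erase x).erase u₁).erase u₂), deg v
      ≤ 2 * (((R.erase x).erase u₁).erase u₂).card := by
    calc ∑ v ∈ (((R.erase x).erase u₁).erase u₂), deg v
        ≤ (((R.erase x).erase u₁).erase u₂).card • 2 :=
          Finset.sum_le_card_nsmul _ _ 2 (fun v _ => hdeg2 v)
      _ = 2 * (((R.erase x).erase u₁).erase u₂).card := by
          rw [smul_eq_mul, Nat.mul_comm]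
  have c1 : (R.erase x).card = R.card - 1 := Finset.card_erase_of_mem hxR
  have c2 : ((R.erase x).erase u₁).card = (R.erase x).card - 1 := Finset.card_erase_of_mem hu₁e
  have c3 : (((R.erase x).erase u₁).erase u₂).card = ((R.erase x).erase u₁).card - 1 :=
    Finset.card_erase_of_mem hu₂e
  have hpos1 : 0 < ((R.erase x).erase u₁).card := Finset.card_pos.2 ⟨u₂, hu₂e⟩
  have hpos2 : 0 < (R.erase x).card := Finset.card_pos.2 ⟨u₁, hu₁e⟩
  have hd1 := hdegu u₁ hu₁M
  have hd2 := hdegu u₂ hu₂M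
  omega


lemma valid_subset {χ : Sym2 (Fin n) → Fin 4} {S : Finset (Fin n)} {i : Fin 4}
    {M T : Finset (Sym2 (Fin n))} (hT : T ⊆ M) (h : Valid χ S i M) : Valid χ S i T :=
  ⟨⟨fun e he => h.1.1 e (hT he), h.1.2.mono (Finset.coe_subset.2 hT)⟩,
    fun e he => h.2 e (hT he)⟩

lemma sym2_eq_of_two_mem {g : Sym2 (Fin n)} {v₁ v₂ : Fin n} (hne : v₁ ≠ v₂)
    (h1 : v₁ ∈ g) (h2 : v₂ ∈ g) : g = s(v₁, v₂) := by
  induction g using Sym2.ind with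
  | _ a b =>
    rw [Sym2.mem_iff] at h1 h2
    rw [Sym2.eq_iff]
    rcases h1 with rfl | rfl <;> rcases h2 with rfl | rfl
    · exact absurd rfl hne
    · exact Or.inl ⟨rfl, rfl⟩
    · exact Or.inr ⟨rfl, rfl⟩
    · exact absurd rfl hne

/-- All non-diagonal edges with both endpoints in `S`. -/
def edgesIn (S : Finset (Fin n)) : Finset (Sym2 (Fin n)) :=
  S.sym2.filter (fun e => ¬ e.IsDiag)

lemma mem_edgesIn {S : Finset (Fin n)} {e : Sym2 (Fin n)} :
    e ∈ edgesIn S ↔ ¬ e.IsDiag ∧ ∀ v ∈ e, v ∈ S := by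
  simp only [edgesIn, Finset.mem_filter, Finset.mem_sym2_iff]
  tauto

lemma eV_inj {e e' : Sym2 (Fin n)} (he : ¬ e.IsDiag) (h : eV e = eV e') : e = e' := by
  induction e using Sym2.ind with
  | _ a b =>
    induction e' using Sym2.ind with
    | _ x y =>
      rw [Sym2.mk_isDiag_iff] at he
      rw [eV_mk, eV_mk] at h
      have ha : a = x ∨ a = y := by
        have := Finset.ext_iff.1 h a
        simp only [Finset.mem_insert, Finset.mem_singleton] at this
        tauto
      have hb : b = x ∨ b = y := by
        have := Finset.ext_iff.1 h b
        simp only [Finset.mem_insert, Finset.mem_singleton] at this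
        tauto
      have hx : x = a ∨ x = b := by
        have := Finset.ext_iff.1 h x
        simp only [Finset.mem_insert, Finset.mem_singleton] at this
        tauto
      rw [Sym2.eq_iff]
      rcases ha with rfl | rfl <;> rcases hb with h' | h' <;> tauto
      
lemma card_edgesIn (S : Finset (Fin n)) : (edgesIn S).card = S.card.choose 2 := by
  rw [← Finset.card_powersetCard 2 S]
  apply Finset.card_bij (fun e _ => eV e)
  · intro e he
    rw [mem_edgesIn] at he
    rw [Finset.mem_powersetCard]
    constructor
    · intro v hv
      exact he.2 v (mem_eV.1 hv)
    · exact card_eV he.1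
  · intro e₁ h₁ e₂ h₂ hEq
    exact eV_inj (mem_edgesIn.1 h₁).1 hEq
  · intro t ht
    rw [Finset.mem_powersetCard] at ht
    obtain ⟨x, y, hxy, rfl⟩ := Finset.card_eq_two.1 ht.2
    refine ⟨s(x, y), ?_, ?_⟩
    · rw [mem_edgesIn]
      refine ⟨by simp [Sym2.mk_isDiag_iff, hxy], ?_⟩
      intro v hv
      rcases Sym2.mem_iff.1 hv with rfl | rfl
      · exact ht.1 (by simp)
      · exact ht.1 (by simp)
    · rw [eV_mk]

lemma nat_id1 (k : ℕ) : k * (2 * k - 1) + 2 * k = 2 * k * k + k := by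
  cases k with
  | zero => rfl
  | succ m =>
    have h : 2 * (m + 1) - 1 = 2 * m + 1 := by omega
    rw [h]
    ring

/-- Per-colour edge bound in the no-essential-vertex case. -/
lemma colorBound (χ : Sym2 (Fin n) → Fin 4) (S : Finset (Fin n)) (c : Fin 4)
    (HB : ∀ v : Fin n, nu χ (S.erase v) c = nu χ S c) :
    ((edgesIn S).filter (fun e => χ e = c)).card
      ≤ 2 * nu χ S c * nu χ S c + nu χ S c := by
  classical
  obtain ⟨M, hMv, hMcard⟩ := exists_max χ S c
  set k := nu χ S c with hk
  set VM := cov M with hVM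
  have hVMS : ∀ v ∈ VM, v ∈ S := by
    intro v hv
    obtain ⟨e, he, hve⟩ := mem_cov.1 hv
    exact (hMv.2 e he).2 v hve
  have hVMcard : VM.card = 2 * k := by rw [hVM, card_cov hMv.1, hMcard]
  have huncov : ∀ u, u ∉ VM ↔ ∀ e ∈ M, u ∉ e := by
    intro u
    simp only [hVM, mem_cov, not_exists]
    tauto
  set Ec := (edgesIn S).filter (fun e => χ e = c) with hEc
  have hEcprop : ∀ e ∈ Ec, ¬ e.IsDiag ∧ (∀ v ∈ e, v ∈ S) ∧ χ e = c := by
    intro e he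
    have := Finset.mem_filter.1 he
    have h2 := mem_edgesIn.1 this.1
    exact ⟨h2.1, h2.2, this.2⟩
  -- no edge between two uncovered vertices
  have indep : ∀ a b : Fin n, a ≠ b → a ∈ S → b ∈ S → χ s(a, b) = c →
      a ∉ VM → b ∉ VM → False := by
    intro a b hab haS hbS hχ ha hb
    obtain ⟨hval, hcard⟩ := valid_insert hMv hab haS hbS hχ
      ((huncov a).1 ha) ((huncov b).1 hb)
    have := card_le_nu hval
    omega
  -- split into edges inside VM and crossing edges
  have hsplitcard : Ec.card = (Ec.filter (fun e => ∀ v ∈ e, v ∈ VM)).card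
      + (Ec.filter (fun e => ¬ ∀ v ∈ e, v ∈ VM)).card :=
    (Finset.card_filter_add_card_filter_not _).symm
  have hE1 : (Ec.filter (fun e => ∀ v ∈ e, v ∈ VM)).card ≤ k * (2 * k - 1) := by
    have hsub : Ec.filter (fun e => ∀ v ∈ e, v ∈ VM) ⊆ edgesIn VM := by
      intro e he
      have h1 := Finset.mem_filter.1 he
      rw [mem_edgesIn]
      exact ⟨(hEcprop e h1.1).1, h1.2⟩
    calc (Ec.filter (fun e => ∀ v ∈ e, v ∈ VM)).card ≤ (edgesIn VM).card :=
          Finset.card_le_card hsub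
      _ = (2 * k).choose 2 := by rw [card_edgesIn, hVMcard]
      _ = k * (2 * k - 1) := by
          rw [Nat.choose_two_right]
          have : 2 * k * (2 * k - 1) = 2 * (k * (2 * k - 1)) := by ring
          rw [this, Nat.mul_div_cancel_left _ (by norm_num)]
  have hE2 : (Ec.filter (fun e => ¬ ∀ v ∈ e, v ∈ VM)).card ≤ 2 * k := by
    set E2 := Ec.filter (fun e => ¬ ∀ v ∈ e, v ∈ VM) with hE2def
    -- structure of crossing edges
    have hstruct : ∀ e ∈ E2, ∃ u w, e = s(u, w) ∧ u ∈ S ∧ u ∉ VM ∧ w ∈ VM := by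
      intro e he
      have h1 := Finset.mem_filter.1 he
      obtain ⟨hnd, hin, hχe⟩ := hEcprop e h1.1
      have h2 := h1.2
      push_neg at h2
      obtain ⟨v, hv, hvVM⟩ := h2
      have hew : e = s(v, (Sym2.Mem.other hv)) := (Sym2.other_spec hv).symm
      set w := Sym2.Mem.other hv with hwdef
      have hwe : w ∈ e := by rw [hew]; simp
      have hvw : v ≠ w := by
        intro h
        apply hnd
        rw [hew, ← h]
        simp [Sym2.mk_isDiag_iff]
      by_cases hwVM : w ∈ VM
      · exact ⟨v, w, hew, hin v hv, hvVM, hwVM⟩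
      · exact absurd (indep v w hvw (hin v hv) (hin w hwe)
          (by rw [← hew]; exact hχe) hvVM hwVM) id
    -- choose the matching edge covering the VM endpoint
    have hchoice : ∀ e, ∃ g, e ∈ E2 → g ∈ M ∧
        ∃ u w, e = s(u, w) ∧ u ∈ S ∧ u ∉ VM ∧ w ∈ g := by
      intro e
      by_cases he : e ∈ E2
      · obtain ⟨u, w, hew, huS, huVM, hwVM⟩ := hstruct e he
        obtain ⟨g, hg, hwg⟩ := mem_cov.1 hwVM
        exact ⟨g, fun _ => ⟨hg, u, w, hew, huS, huVM, hwg⟩⟩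
      · exact ⟨e, fun h => absurd h he⟩
    choose φ hφ using hchoice
    have hfib : E2.card = ∑ g ∈ M, (E2.filter (fun e => φ e = g)).card :=
      Finset.card_eq_sum_card_fiberwise (fun e he => (hφ e he).1)
    have hfib2 : ∀ g ∈ M, (E2.filter (fun e => φ e = g)).card ≤ 2 := by
      intro g hg
      set fib := E2.filter (fun e => φ e = g) with hfibdef
      rcases Finset.eq_empty_or_nonempty fib with h | ⟨e₀, he₀⟩
      · simp [h]
      have he₀E2 : e₀ ∈ E2 := (Finset.mem_filter.1 he₀).1
      have he₀φ : φ e₀ = g := (Finset.mem_filter.1 he₀).2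
      obtain ⟨-, u₀, w₀, he₀eq, hu₀S, hu₀VM, hw₀g⟩ := hφ e₀ he₀E2
      rw [he₀φ] at hw₀g
      have hw₀VM : w₀ ∈ VM := mem_cov.2 ⟨g, hg, hw₀g⟩
      have hu₀cov := (huncov u₀).1 hu₀VM
      have he₀Ec : e₀ ∈ Ec := (Finset.mem_filter.1 he₀E2).1
      have hχe₀ : χ s(u₀, w₀) = c := by
        rw [← he₀eq]; exact (hEcprop e₀ he₀Ec).2.2
      have hu₀w₀ : u₀ ≠ w₀ := fun h => hu₀VM (h ▸ hw₀VM)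
      have hw₀S : w₀ ∈ S := hVMS w₀ hw₀VM
      have hsub : fib ⊆ (eV g).image (fun w => s(u₀, w)) := by
        intro e he
        have heE2 : e ∈ E2 := (Finset.mem_filter.1 he).1
        have heφ : φ e = g := (Finset.mem_filter.1 he).2
        obtain ⟨-, u, w, heeq, huS, huVM, hwg⟩ := hφ e heE2
        rw [heφ] at hwg
        have hwVM : w ∈ VM := mem_cov.2 ⟨g, hg, hwg⟩
        have hucov := (huncov u).1 huVM
        have heEc : e ∈ Ec := (Finset.mem_filter.1 heE2).1
        have hχe : χ s(u, w) = c := by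
          rw [← heeq]; exact (hEcprop e heEc).2.2
        have huw : u ≠ w := fun h => huVM (h ▸ hwVM)
        have huw₀ : u ≠ w₀ := fun h => huVM (h ▸ hw₀VM)
        have hwS : w ∈ S := hVMS w hwVM
        have key : u = u₀ := by
          by_contra huu
          by_cases hww : w = w₀
          · -- cherry
            exact no_cherry χ S c HB M hMv hMcard w₀ u u₀ hw₀S huS hu₀S hucov hu₀cov
              huu huw₀ hu₀w₀ (by rw [← hww]; exact hχe) hχe₀
          · -- augmenting path of length 3
            have hgeq : g = s(w, w₀) := sym2_eq_of_two_mem hww hwg hw₀g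
            have hM1 : Valid χ S c (M.erase g) :=
              valid_subset (Finset.erase_subset _ _) hMv
            have hfa1 : ∀ f ∈ M.erase g, u₀ ∉ f :=
              fun f hf => hu₀cov f (Finset.mem_of_mem_erase hf)
            have hfb1 : ∀ f ∈ M.erase g, w₀ ∉ f := by
              intro f hf hw₀f
              exact hMv.1.2 (Finset.mem_coe.2 (Finset.mem_of_mem_erase hf))
                (Finset.mem_coe.2 hg) (Finset.ne_of_mem_erase hf) w₀ hw₀f hw₀g
            obtain ⟨hval1, hcard1⟩ := valid_insert hM1 hu₀w₀ hu₀S hw₀S hχe₀ hfa1 hfb1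
            have hfa2 : ∀ f ∈ insert s(u₀, w₀) (M.erase g), u ∉ f := by
              intro f hf hu
              rcases Finset.mem_insert.1 hf with rfl | hf'
              · rcases Sym2.mem_iff.1 hu with h | h
                · exact huu h
                · exact huw₀ h
              · exact hucov f (Finset.mem_of_mem_erase hf') hu
            have hfb2 : ∀ f ∈ insert s(u₀, w₀) (M.erase g), w ∉ f := by
              intro f hf hw
              rcases Finset.mem_insert.1 hf with rfl | hf'
              · rcases Sym2.mem_iff.1 hw with h | h
                · exact hu₀VM (h ▸ hwVM)
                · exact hww h
              · exact hMv.1.2 (Finset.mem_coe.2 (Finset.mem_of_mem_erase hf'))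
                  (Finset.mem_coe.2 hg) (Finset.ne_of_mem_erase hf') w hw hwg
            obtain ⟨hval2, hcard2⟩ := valid_insert hval1 huw huS hwS hχe hfa2 hfb2
            have hle := card_le_nu hval2
            have hkpos : 1 ≤ k := by
              rw [← hMcard]
              exact Finset.card_pos.2 ⟨g, hg⟩
            have herase : (M.erase g).card = k - 1 := by
              rw [Finset.card_erase_of_mem hg, hMcard]
            omega
        rw [heeq, key]
        exact Finset.mem_image.2 ⟨w, mem_eV.2 hwg, rfl⟩
      calc fib.card ≤ ((eV g).image (fun w => s(u₀, w))).card := Finset.card_le_card hsub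
        _ ≤ (eV g).card := Finset.card_image_le
        _ = 2 := card_eV (hMv.1.1 g hg)
    calc E2.card = ∑ g ∈ M, (E2.filter (fun e => φ e = g)).card := hfib
      _ ≤ M.card • 2 := Finset.sum_le_card_nsmul _ _ 2 hfib2
      _ = 2 * k := by rw [smul_eq_mul, hMcard, Nat.mul_comm]
  calc Ec.card = _ + _ := hsplitcard
    _ ≤ k * (2 * k - 1) + 2 * k := Nat.add_le_add hE1 hE2
    _ = 2 * k * k + k := nat_id1 k


lemma quad_le (x m : ℕ) (h : x ≤ m) : 2*x*x + x ≤ x * (2*m+1) := by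
  calc 2*x*x + x = x * (2*x+1) := by ring
    _ ≤ x * (2*m+1) := Nat.mul_le_mul_left x (by omega)

lemma two_mul_choose_two (N : ℕ) : 2 * N.choose 2 = N * (N - 1) := by
  rw [Nat.choose_two_right]
  rcases N with _ | m
  · simp
  · rw [Nat.succ_sub_one]
    apply Nat.mul_div_cancel'
    have h := Nat.even_mul_succ_self m
    rw [Nat.mul_comm] at h
    exact h.two_dvd

/-- Main inequality : `∑ν + max ν + 1 ≥ |S|` for every 4-colouring. -/
theorem mainIneq (χ : Sym2 (Fin n) → Fin 4) (S : Finset (Fin n)) :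
    S.card ≤ (∑ c : Fin 4, nu χ S c) + (Finset.univ.sup (nu χ S)) + 1 := by
  classical
  induction S using Finset.strongInduction with
  | _ S ih =>
    by_cases hA : ∃ c v, nu χ (S.erase v) c < nu χ S c
    · obtain ⟨c, v, hv⟩ := hA
      have hvS : v ∈ S := by
        by_contra h
        rw [Finset.erase_eq_of_notMem h] at hv
        omega
      have IH := ih _ (Finset.erase_ssubset hvS)
      have hsum : (∑ c' : Fin 4, nu χ (S.erase v) c') + 1 ≤ ∑ c' : Fin 4, nu χ S c' := by
        have := Finset.sum_lt_sum (fun i (_ : i ∈ Finset.univ) =>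
          nu_mono (Finset.erase_subset v S) i) ⟨c, Finset.mem_univ c, hv⟩
        omega
      have hsup : Finset.univ.sup (nu χ (S.erase v)) ≤ Finset.univ.sup (nu χ S) :=
        Finset.sup_mono_fun (fun i _ => nu_mono (Finset.erase_subset v S) i)
      have hcard : (S.erase v).card = S.card - 1 := Finset.card_erase_of_mem hvS
      have hpos : 1 ≤ S.card := Finset.card_pos.2 ⟨v, hvS⟩
      omega
    · push_neg at hA
      have HB : ∀ c v, nu χ (S.erase v) c = nu χ S c := fun c v =>
        le_antisymm (nu_mono (Finset.erase_subset v S) c) (hA c v)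
      by_contra hcon
      push_neg at hcon
      -- abbreviations
      set m : ℕ := Finset.univ.sup (nu χ S) with hm
      have hkm : ∀ c : Fin 4, nu χ S c ≤ m := fun c => Finset.le_sup (Finset.mem_univ c)
      -- total edge count
      have htot : (edgesIn S).card
          = ∑ c : Fin 4, ((edgesIn S).filter (fun e => χ e = c)).card :=
        Finset.card_eq_sum_card_fiberwise (fun e _ => Finset.mem_univ (χ e))
      have hEc : ∀ c : Fin 4, ((edgesIn S).filter (fun e => χ e = c)).card
          ≤ 2 * nu χ S c * nu χ S c + nu χ S c :=
        fun c => colorBound χ S c (fun v => HB c v)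
      have hbound : (edgesIn S).card
          ≤ ∑ c : Fin 4, (2 * nu χ S c * nu χ S c + nu χ S c) := by
        rw [htot]
        exact Finset.sum_le_sum (fun c _ => hEc c)
      have h2 : 2 * (edgesIn S).card = S.card * (S.card - 1) := by
        rw [card_edgesIn]; exact two_mul_choose_two _
      -- numeric contradiction
      set a := nu χ S 0
      set b := nu χ S 1
      set c := nu χ S 2
      set d := nu χ S 3
      have hsum4 : ∑ c' : Fin 4, nu χ S c' = a + b + c + d := by
        rw [Fin.sum_univ_four]
      have hsum4' : ∑ c' : Fin 4, (2 * nu χ S c' * nu χ S c' + nu χ S c')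
          = (2*a*a + a) + (2*b*b + b) + (2*c*c + c) + (2*d*d + d) := by
        rw [Fin.sum_univ_four]
      have ha : a ≤ m := hkm 0
      have hb : b ≤ m := hkm 1
      have hc : c ≤ m := hkm 2
      have hd : d ≤ m := hkm 3
      have hN : a + b + c + d + m + 2 ≤ S.card := by omega
      have hNN : S.card * (S.card - 1) ≤ 2 * ((2*a*a + a) + (2*b*b + b) + (2*c*c + c) + (2*d*d + d)) := by
        rw [← h2]
        rw [hsum4'] at hbound
        omega
      -- derive the contradiction
      set s := a + b + c + d with hs
      have hq : (2*a*a + a) + (2*b*b + b) + (2*c*c + c) + (2*d*d + d) ≤ s * (2*m + 1) := by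
        have h3 := quad_le a m ha
        have h4 := quad_le b m hb
        have h5 := quad_le c m hc
        have h6 := quad_le d m hd
        calc (2*a*a + a) + (2*b*b + b) + (2*c*c + c) + (2*d*d + d)
            ≤ a * (2*m+1) + b * (2*m+1) + c * (2*m+1) + d * (2*m+1) := by omega
          _ = s * (2*m+1) := by rw [hs]; ring
      have hfin : (s + m + 2) * (s + m + 1) ≤ 2 * (s * (2*m+1)) := by
        calc (s + m + 2) * (s + m + 1) ≤ S.card * (S.card - 1) := by
              apply Nat.mul_le_mul
              · omega
              · omega
          _ ≤ 2 * ((2*a*a + a) + (2*b*b + b) + (2*c*c + c) + (2*d*d + d)) := hNN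
          _ ≤ 2 * (s * (2*m+1)) := by omega
      zify at hfin
      nlinarith [sq_nonneg ((s : ℤ) - m), hfin]


/-- Upper bound: every 4-colouring of `K_{5r-3}` has a monochromatic `r`-matching. -/
theorem upperBound (r : ℕ) (hr : 1 ≤ r) (χ : Sym2 (Fin (5 * r - 3)) → Fin 4) :
    ∃ i : Fin 4, ∃ M : Finset (Sym2 (Fin (5 * r - 3))),
      M.card = r ∧ IsMatchingIn M ∧ ∀ e ∈ M, χ e = i := by
  classical
  have h := mainIneq χ (Finset.univ)
  rw [Finset.card_univ, Fintype.card_fin] at h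
  have hex : ∃ c : Fin 4, r ≤ nu χ Finset.univ c := by
    by_contra hno
    push_neg at hno
    have hsup : Finset.univ.sup (nu χ Finset.univ) ≤ r - 1 :=
      Finset.sup_le (fun c _ => by have := hno c; omega)
    have hsum : ∑ c : Fin 4, nu χ Finset.univ c ≤ 4 * (r - 1) := by
      calc ∑ c : Fin 4, nu χ Finset.univ c ≤ ∑ _c : Fin 4, (r - 1) :=
            Finset.sum_le_sum (fun c _ => by have := hno c; omega)
        _ = 4 * (r - 1) := by simp [Finset.sum_const, Nat.mul_comm]
    omega
  obtain ⟨c, hc⟩ := hex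
  obtain ⟨M, hMv, hMcard⟩ := exists_max χ Finset.univ c
  obtain ⟨M', hsub, hcard'⟩ := Finset.exists_subset_card_eq (s := M) (n := r) (by omega)
  have hv := valid_subset hsub hMv
  exact ⟨c, M', hcard', hv.1, fun e he => (hv.2 e he).1⟩

lemma max_eq_zero_fin4 {a b : Fin 4} (h : max a b = 0) : a = 0 ∧ b = 0 := by
  constructor
  · have : a ≤ max a b := le_max_left a b
    rw [h] at this
    exact Fin.le_zero_iff.1 this
  · have : b ≤ max a b := le_max_right a b
    rw [h] at this
    exact Fin.le_zero_iff.1 this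

lemma card_val_interval (m a b : ℕ) (hb : b ≤ m) :
    ((Finset.univ : Finset (Fin m)).filter (fun v : Fin m => a ≤ v.val ∧ v.val < b)).card
      = b - a := by
  rw [← Nat.card_Ico a b]
  apply Finset.card_bij (fun (v : Fin m) _ => v.val)
  · intro v hv
    have := (Finset.mem_filter.1 hv).2
    rw [Finset.mem_Ico]
    exact this
  · intro v₁ h₁ v₂ h₂ h
    exact Fin.val_injective h
  · intro x hx
    rw [Finset.mem_Ico] at hx
    exact ⟨⟨x, by omega⟩, Finset.mem_filter.2 ⟨Finset.mem_univ _, hx⟩, rfl⟩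

/-- Counting: a matching in colour `i ≠ 0` injects into block `i`. -/
lemma block_count {m : ℕ} (f : Fin m → Fin 4) (M : Finset (Sym2 (Fin m)))
    (hmatch : IsMatchingIn M) (i : Fin 4)
    (hcol : ∀ e ∈ M, Sym2.lift ⟨fun u v => max (f u) (f v), fun u v => max_comm _ _⟩ e = i) :
    M.card ≤ ((Finset.univ : Finset (Fin m)).filter (fun v => f v = i)).card := by
  classical
  have hpick : ∀ e, ∃ v, e ∈ M → (v ∈ e ∧ f v = i) := by
    intro e
    induction e using Sym2.ind with
    | _ a b =>
      by_cases he : s(a, b) ∈ M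
      · have hχ : max (f a) (f b) = i := hcol _ he
        rcases max_choice (f a) (f b) with h | h
        · exact ⟨a, fun _ => ⟨by simp, by rw [← hχ, h]⟩⟩
        · exact ⟨b, fun _ => ⟨by simp, by rw [← hχ, h]⟩⟩
      · exact ⟨a, fun h => absurd h he⟩
  choose ψ hψ using hpick
  apply Finset.card_le_card_of_injOn ψ
  · intro e he
    exact Finset.mem_filter.2 ⟨Finset.mem_univ _, (hψ e he).2⟩
  · intro e₁ h₁ e₂ h₂ heq
    by_contra hne
    exact hmatch.2 h₁ h₂ hne (ψ e₁) (hψ e₁ h₁).1 (heq ▸ (hψ e₂ h₂).1)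

/-- Counting: a matching in colour `0` has all its vertices in block `0`. -/
lemma block_count0 {m : ℕ} (f : Fin m → Fin 4) (M : Finset (Sym2 (Fin m)))
    (hmatch : IsMatchingIn M)
    (hcol : ∀ e ∈ M, Sym2.lift ⟨fun u v => max (f u) (f v), fun u v => max_comm _ _⟩ e = 0) :
    2 * M.card ≤ ((Finset.univ : Finset (Fin m)).filter (fun v => f v = 0)).card := by
  rw [← card_cov hmatch]
  apply Finset.card_le_card
  intro v hv
  obtain ⟨e, he, hve⟩ := mem_cov.1 hv
  have hχ := hcol e he
  refine Finset.mem_filter.2 ⟨Finset.mem_univ _, ?_⟩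
  revert hve hχ
  induction e using Sym2.ind with
  | _ a b =>
    intro hve hχ
    have hχ' : max (f a) (f b) = 0 := hχ
    obtain ⟨h1, h2⟩ := max_eq_zero_fin4 hχ'
    rcases Sym2.mem_iff.1 hve with rfl | rfl
    · exact h1
    · exact h2

/-- Lower bound: a 4-colouring of `K_{5r-4}` without monochromatic `r`-matchings. -/
theorem lowerBound (r : ℕ) (hr : 1 ≤ r) :
    ∃ χ : Sym2 (Fin (5 * r - 4)) → Fin 4,
      ¬ ∃ i : Fin 4, ∃ M : Finset (Sym2 (Fin (5 * r - 4))),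
        M.card = r ∧ IsMatchingIn M ∧ ∀ e ∈ M, χ e = i := by
  classical
  set m := 5 * r - 4 with hm
  set f : Fin m → Fin 4 := fun v =>
    if v.val < 2 * r - 1 then 0
    else if v.val < 3 * r - 2 then 1
    else if v.val < 4 * r - 3 then 2 else 3 with hf
  -- block cardinalities
  have hb0 : ((Finset.univ : Finset (Fin m)).filter (fun v => f v = 0)).card = 2 * r - 1 := by
    have heq : ((Finset.univ : Finset (Fin m)).filter (fun v => f v = 0))
        = (Finset.univ : Finset (Fin m)).filter (fun v : Fin m => 0 ≤ v.val ∧ v.val < 2 * r - 1) := by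
      apply Finset.filter_congr
      intro v _
      simp only [hf]
      split_ifs with h1 h2 h3 <;> simp <;> omega
    rw [heq, card_val_interval m 0 (2 * r - 1) (by omega)]
    omega
  have hb1 : ((Finset.univ : Finset (Fin m)).filter (fun v => f v = 1)).card = r - 1 := by
    have heq : ((Finset.univ : Finset (Fin m)).filter (fun v => f v = 1))
        = (Finset.univ : Finset (Fin m)).filter
            (fun v : Fin m => 2 * r - 1 ≤ v.val ∧ v.val < 3 * r - 2) := by
      apply Finset.filter_congr
      intro v _
      simp only [hf]
      split_ifs with h1 h2 h3 <;> simp <;> omega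
    rw [heq, card_val_interval m (2 * r - 1) (3 * r - 2) (by omega)]
    omega
  have hb2 : ((Finset.univ : Finset (Fin m)).filter (fun v => f v = 2)).card = r - 1 := by
    have heq : ((Finset.univ : Finset (Fin m)).filter (fun v => f v = 2))
        = (Finset.univ : Finset (Fin m)).filter
            (fun v : Fin m => 3 * r - 2 ≤ v.val ∧ v.val < 4 * r - 3) := by
      apply Finset.filter_congr
      intro v _
      simp only [hf]
      split_ifs with h1 h2 h3 <;> simp <;> omega
    rw [heq, card_val_interval m (3 * r - 2) (4 * r - 3) (by omega)]
    omega
  have hb3 : ((Finset.univ : Finset (Fin m)).filter (fun v => f v = 3)).card = r - 1 := by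
    have heq : ((Finset.univ : Finset (Fin m)).filter (fun v => f v = 3))
        = (Finset.univ : Finset (Fin m)).filter
            (fun v : Fin m => 4 * r - 3 ≤ v.val ∧ v.val < m) := by
      apply Finset.filter_congr
      intro v _
      simp only [hf]
      split_ifs with h1 h2 h3 <;> simp <;> omega
    rw [heq, card_val_interval m (4 * r - 3) m (by omega)]
    omega
  refine ⟨Sym2.lift ⟨fun u v => max (f u) (f v), fun u v => max_comm _ _⟩, ?_⟩
  rintro ⟨i, M, hcard, hmatch, hcol⟩
  fin_cases i
  · have := block_count0 f M hmatch hcol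
    rw [hcard, hb0] at this
    omega
  · have := block_count f M hmatch 1 hcol
    rw [hcard, hb1] at this
    omega
  · have := block_count f M hmatch 2 hcol
    rw [hcard, hb2] at this
    omega
  · have := block_count f M hmatch 3 hcol
    rw [hcard, hb3] at this
    omega

end CL

/-- For `r ≥ 1`, the 4-colour Ramsey number of `rK₂` equals `5r − 3`. -/
theorem ramsey_four_colour_matching (r : ℕ) (hr : 1 ≤ r) :
    (∀ c : Sym2 (Fin (5 * r - 3)) → Fin 4,
        ColoringHasMatching (5 * r - 3) 4 (fun _ => r) c) ∧
      (∃ c : Sym2 (Fin (5 * r - 4)) → Fin 4,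
        ¬ ColoringHasMatching (5 * r - 4) 4 (fun _ => r) c) := by
  constructor
  · intro c
    obtain ⟨i, M, h1, h2, h3⟩ := CL.upperBound r hr c
    exact ⟨i, M, h1, h2, h3⟩
  · obtain ⟨χ, hχ⟩ := CL.lowerBound r hr
    refine ⟨χ, fun h => hχ ?_⟩
    obtain ⟨i, M, h1, h2, h3⟩ := h
    exact ⟨i, M, h1, h2, h3⟩
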